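/- Let m = Δ_1 + ⋯ + Δ_N be a regular multisegment with Δ_i = [a_i; b_i] and b_1 > b_2 > ⋯ > b_N, whose associated permutation σ = σ_m avoids the pattern 4231. Let I = {i : a_N ≤ a_i and b_i ≤ b_{σ(N)}}. Then the multisegment consisting of the segments Δ_i with i ∈ I is a ladder. -/
import Mathlib


/-- A segment `[a;b]` is a pair of integers `a ≤ b`. -/
structure Segment where
  a : ℤ
  b : ℤ
  le : a ≤ b

namespace Segment

/-- `Δ ≺ Δ'` : the segment `Δ = [a;b]` precedes `Δ' = [c;d]`,
i.e. `a < c`, `c - 1 ≤ b` and `b < d`. -/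
def prec (Δ Δ' : Segment) : Prop :=
  Δ.a < Δ'.a ∧ Δ'.a - 1 ≤ Δ.b ∧ Δ.b < Δ'.b

/-- `←Δ = [a-1; b-1]`. -/
def shift (Δ : Segment) : Segment :=
  ⟨Δ.a - 1, Δ.b - 1, by have := Δ.le; omega⟩

instance (Δ Δ' : Segment) : Decidable (Δ.prec Δ') := by
  unfold prec; infer_instance

end Segment

/-- A multisegment (given as an indexed family of segments) is regular if the beginnings
of its segments are pairwise distinct and the ends of its segments are pairwise distinct. -/
def Regular {ι : Type*} (Δ : ι → Segment) : Prop :=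
  (∀ i j : ι, (Δ i).a = (Δ j).a → i = j) ∧ (∀ i j : ι, (Δ i).b = (Δ j).b → i = j)

/-- The condition `LC(Δ₀, m)` : there is an injective function
`f : X_{Δ₀,m} → Y_{Δ₀,m}` with `Δ_{f i} ≺ Δ_i` for all `i ∈ X_{Δ₀,m}`,
where `X_{Δ₀,m} = {i | Δ₀ ≺ Δ_i}` and `Y_{Δ₀,m} = {i | ←Δ₀ ≺ Δ_i}`. -/
def LC {ι : Type*} (Δ₀ : Segment) (Δ : ι → Segment) : Prop :=
  ∃ f : ι → ι, Set.InjOn f {i | Δ₀.prec (Δ i)} ∧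
    ∀ i : ι, Δ₀.prec (Δ i) → Δ₀.shift.prec (Δ (f i)) ∧ (Δ (f i)).prec (Δ i)

/-- The condition `RC(Δ₀, m)` : there is an injective function
`f : X̃_{Δ₀,m} → Ỹ_{Δ₀,m}` with `Δ_i ≺ Δ_{f i}` for all `i ∈ X̃_{Δ₀,m}`,
where `X̃_{Δ₀,m} = {i | Δ_i ≺ Δ₀}` and `Ỹ_{Δ₀,m} = {i | ←Δ_i ≺ Δ₀}`. -/
def RC {ι : Type*} (Δ₀ : Segment) (Δ : ι → Segment) : Prop :=
  ∃ f : ι → ι, Set.InjOn f {i | (Δ i).prec Δ₀} ∧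
    ∀ i : ι, (Δ i).prec Δ₀ → (Δ (f i)).shift.prec Δ₀ ∧ (Δ i).prec (Δ (f i))

/-- The sub-multisegment of `Δ` indexed by the finite set `S` is a ladder: its segments can
be enumerated so that both the beginnings and the ends are strictly decreasing. -/
def IsLadder {ι : Type*} (Δ : ι → Segment) (S : Finset ι) : Prop :=
  ∃ e : Fin S.card ≃ {x // x ∈ S}, ∀ k l : Fin S.card, k < l →
    (Δ (e l).val).a < (Δ (e k).val).a ∧ (Δ (e l).val).b < (Δ (e k).val).b

/-- `σ ∈ S_N` contains the pattern `τ ∈ S_k` : there are indices `i_1 < ⋯ < i_k` with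
`σ(i_s) < σ(i_t) ↔ τ(s) < τ(t)` for all `s, t`. -/
def ContainsPattern {N k : ℕ} (σ : Equiv.Perm (Fin N)) (τ : Equiv.Perm (Fin k)) : Prop :=
  ∃ g : Fin k ↪o Fin N, ∀ s t : Fin k, σ (g s) < σ (g t) ↔ τ s < τ t

/-- `σ` avoids the pattern `τ`. -/
def Avoids {N k : ℕ} (σ : Equiv.Perm (Fin N)) (τ : Equiv.Perm (Fin k)) : Prop :=
  ¬ ContainsPattern σ τ

/-- The pattern `4231` (in one-line notation), as a permutation of `Fin 4`. -/
def perm4231 : Equiv.Perm (Fin 4) := Equiv.swap 0 3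

/-- The pattern `3412` (in one-line notation), as a permutation of `Fin 4`. -/
def perm3412 : Equiv.Perm (Fin 4) := Equiv.swap 0 2 * Equiv.swap 1 3

/-- Let `m = Δ_1 + ⋯ + Δ_N` be a regular multisegment with `b_1 > ⋯ > b_N` whose
associated permutation `σ` avoids the pattern `4231`, and let
`I = {i : a_N ≤ a_i and b_i ≤ b_{σ(N)}}`. Then the multisegment consisting of the
segments `Δ_i` with `i ∈ I` is a ladder. (Indices are 0-based: `Δ_N` is index `N-1`.) -/
theorem statement13 {N : ℕ} (hN : 0 < N) (Δ : Fin N → Segment) (hreg : Regular Δ)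
    (hb : ∀ i j : Fin N, i < j → (Δ j).b < (Δ i).b)
    (σ : Equiv.Perm (Fin N))
    (hσ : ∀ i j : Fin N, i < j → (Δ (σ i)).a < (Δ (σ j)).a)
    (hav : Avoids σ perm4231) :
    IsLadder Δ (Finset.univ.filter fun i =>
      (Δ ⟨N - 1, by omega⟩).a ≤ (Δ i).a ∧
      (Δ i).b ≤ (Δ (σ ⟨N - 1, by omega⟩)).b) := by
    classical
  have hNle : N - 1 < N := by omega
  set s : Fin N := ⟨N - 1, hNle⟩ with hsdef
  have hles : ∀ k : Fin N, k ≤ s := by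
    intro k
    have := k.isLt
    simp only [Fin.le_def, hsdef]
    omega
  have hainv : ∀ i j : Fin N, (Δ i).a < (Δ j).a → σ.symm i < σ.symm j := by
    intro i j h
    rcases lt_trichotomy (σ.symm i) (σ.symm j) with h' | h' | h'
    · exact h'
    · exact absurd h (by rw [σ.symm.injective h']; exact lt_irrefl _)
    · have h2 := hσ _ _ h'
      simp only [Equiv.apply_symm_apply] at h2
      exact absurd h (not_lt.2 (le_of_lt h2))
  have hbinv : ∀ i j : Fin N, (Δ i).b ≤ (Δ j).b → j ≤ i := by
    intro i j h
    by_contra h'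
    push_neg at h'
    exact absurd (hb _ _ h') (not_lt.2 h)
  have key : ∀ i j : Fin N,
      ((Δ s).a ≤ (Δ i).a ∧ (Δ i).b ≤ (Δ (σ s)).b) →
      ((Δ s).a ≤ (Δ j).a ∧ (Δ j).b ≤ (Δ (σ s)).b) →
      i < j → (Δ j).a < (Δ i).a := by
    intro i j hi hj hij
    by_contra hcon
    push_neg at hcon
    have hne : (Δ i).a ≠ (Δ j).a := fun h => absurd (hreg.1 _ _ h) (by
      intro he; rw [he] at hij; exact lt_irrefl _ hij)
    have haij : (Δ i).a < (Δ j).a := lt_of_le_of_ne hcon hne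
    have hp : σ.symm i < σ.symm j := hainv _ _ haij
    have hpsi : σ.symm s ≤ σ.symm i := by
      rcases eq_or_lt_of_le hi.1 with h | h
      · exact le_of_eq (congrArg σ.symm (hreg.1 _ _ h))
      · exact le_of_lt (hainv _ _ h)
    have hsi : σ s ≤ i := hbinv _ _ hi.2
    have hsj : σ s < j := lt_of_le_of_lt hsi hij
    have hjs : j < s := by
      rcases eq_or_lt_of_le (hles j) with h | h
      · exfalso; rw [h] at hp; exact absurd hp (not_lt.2 hpsi)
      · exact h
    have hsi2 : σ s < i := by
      rcases eq_or_lt_of_le hsi with h | h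
      · exfalso; rw [← h] at hp
        simp only [Equiv.symm_apply_apply] at hp
        exact absurd (hles (σ.symm j)) (not_le.2 hp)
      · exact h
    have hpjs : σ.symm j < s := by
      rcases eq_or_lt_of_le (hles (σ.symm j)) with h | h
      · exfalso
        have hj2 : j = σ s := by rw [← h]; simp
        rw [hj2] at hsj; exact lt_irrefl _ hsj
      · exact h
    have hpsi2 : σ.symm s < σ.symm i := by
      rcases eq_or_lt_of_le hpsi with h | h
      · exfalso
        have : s = i := σ.symm.injective h
        rw [← this] at hij
        exact absurd (hles j) (not_le.2 hij)
      · exact h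
    set v : Fin 4 → Fin N := ![σ.symm s, σ.symm i, σ.symm j, s] with hv
    have hv0 : v 0 = σ.symm s := rfl
    have hv1 : v 1 = σ.symm i := rfl
    have hv2 : v 2 = σ.symm j := rfl
    have hv3 : v 3 = s := rfl
    have hmono : StrictMono v := by
      intro u w huw
      fin_cases u <;> fin_cases w <;>
        first
          | exact absurd huw (by decide)
          | simpa [hv] using hpsi2
          | simpa [hv] using hp
          | simpa [hv] using hpjs
          | simpa [hv] using lt_trans hpsi2 hp
          | simpa [hv] using lt_trans hp hpjs
          | simpa [hv] using lt_trans hpsi2 (lt_trans hp hpjs)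
    apply hav
    refine ⟨OrderEmbedding.ofStrictMono v hmono, ?_⟩
    have e0 : σ (v 0) = s := σ.apply_symm_apply s
    have e1 : σ (v 1) = i := σ.apply_symm_apply i
    have e2 : σ (v 2) = j := σ.apply_symm_apply j
    have e3 : σ (v 3) = σ s := rfl
    have ord1 : σ s < i := hsi2
    have ord2 : i < j := hij
    have ord3 : j < s := hjs
    have hval : ∀ u : Fin 4, σ (v u) = ![s, i, j, σ s] u := by
      intro u
      fin_cases u
      · exact e0
      · exact e1
      · exact e2
      · exact e3
    intro u w
    simp only [OrderEmbedding.coe_ofStrictMono]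
    rw [hval u, hval w]
    fin_cases u <;> fin_cases w <;>
      simp only [Matrix.cons_val_zero, Matrix.cons_val_one, Matrix.head_cons,
        Matrix.cons_val_two, Matrix.tail_cons, Matrix.cons_val_three,
        Matrix.cons_val_fin_one, Fin.isValue] <;>
      constructor <;> intro h <;>
      first
        | decide
        | exact ord2
        | exact lt_trans ord1 ord2
        | exact lt_trans ord2 ord3
        | exact ord1
        | exact ord3
        | exact lt_trans (lt_trans ord1 ord2) ord3
        | exact absurd h (by decide)
        | exact absurd h (lt_irrefl _)
        | exact absurd h (not_lt.2 (le_of_lt ord1))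
        | exact absurd h (not_lt.2 (le_of_lt ord2))
        | exact absurd h (not_lt.2 (le_of_lt ord3))
        | exact absurd h (not_lt.2 (le_of_lt (lt_trans ord1 ord2)))
        | exact absurd h (not_lt.2 (le_of_lt (lt_trans ord2 ord3)))
        | exact absurd h (not_lt.2 (le_of_lt (lt_trans (lt_trans ord1 ord2) ord3)))
  set S := Finset.univ.filter fun i =>
      (Δ s).a ≤ (Δ i).a ∧ (Δ i).b ≤ (Δ (σ s)).b with hSdef
  show IsLadder Δ S
  refine ⟨(S.orderIsoOfFin rfl).toEquiv, ?_⟩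
  intro k l hkl
  have hm : ((S.orderIsoOfFin rfl k : {x // x ∈ S}) : Fin N)
      < ((S.orderIsoOfFin rfl l : {x // x ∈ S}) : Fin N) :=
    (S.orderIsoOfFin rfl).strictMono hkl
  have hk := (S.orderIsoOfFin rfl k).2
  have hl := (S.orderIsoOfFin rfl l).2
  exact ⟨key _ _ (Finset.mem_filter.mp hk).2 (Finset.mem_filter.mp hl).2 hm, hb _ _ hm⟩
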